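/- Let n ≥ 1 and r_n = n(n+1)/2. Let M be the set of dominant words over {1,…,n}, and for μ, μ' ∈ M define μ ⊙ μ' := maxSh(μ, μ'), the lexicographically greatest shuffle of μ and μ'. Then μ ⊙ μ' is again a dominant word, (M, ⊙) is a commutative monoid whose identity is the empty word, and the multiplicity-vector map μ ↦ v(μ) is a monoid isomorphism from (M, ⊙) onto (ℕ^{r_n}, +). -/

import Mathlib

/-- `IsShuffle u v w` : the word `w` is a shuffle (interleaving) of the words `u` and `v`. -/
inductive IsShuffle : List ℕ → List ℕ → List ℕ → Prop
  | nil : IsShuffle [] [] []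
  | left (a : ℕ) {u v w : List ℕ} : IsShuffle u v w → IsShuffle (a :: u) v (a :: w)
  | right (a : ℕ) {u v w : List ℕ} : IsShuffle u v w → IsShuffle u (a :: v) (a :: w)

/-- The segment ⟨k,l⟩, i.e. the word (k, k+1, …, l). -/
def segWord (k l : ℕ) : List ℕ := List.range' k (l + 1 - k)

/-- `w` is a segment of the alphabet {1,…,n}. -/
def IsSegment (n : ℕ) (w : List ℕ) : Prop :=
  ∃ k l : ℕ, 1 ≤ k ∧ k ≤ l ∧ l ≤ n ∧ w = segWord k l

/-- A dominant word of type `A_n`: a concatenation of segments in weakly decreasing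
lexicographic order (this is then automatically the canonical factorization). -/
def IsDominant (n : ℕ) (w : List ℕ) : Prop :=
  ∃ fs : List (List ℕ), List.Chain' (· ≥ ·) fs ∧ (∀ u ∈ fs, IsSegment n u) ∧ fs.flatten = w

/-- The segments of {1,…,n}, enumerated in decreasing lexicographic order
(first component descending, then second component descending). -/
def segEnum (n : ℕ) : List (ℕ × ℕ) :=
  ((List.range' 1 n).reverse.map fun k =>
    (List.range' k (n + 1 - k)).reverse.map fun l => (k, l)).flatten

/-- A multiplicity vector: a function supported on the valid segments of {1,…,n}. -/
def SuppValid (n : ℕ) (c : ℕ × ℕ → ℕ) : Prop :=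
  ∀ p : ℕ × ℕ, c p ≠ 0 → 1 ≤ p.1 ∧ p.1 ≤ p.2 ∧ p.2 ≤ n

/-- The word obtained from a multiplicity vector by concatenating the segments,
with the given multiplicities, in decreasing lexicographic order.  This is the inverse of
the multiplicity-vector map `μ ↦ v(μ)`. -/
def buildWord (n : ℕ) (c : ℕ × ℕ → ℕ) : List ℕ :=
  ((segEnum n).map fun p => (List.replicate (c p) (segWord p.1 p.2)).flatten).flatten

/-! ### shuffle basics -/

theorem IsShuffle.swap {u v w : List ℕ} (h : IsShuffle u v w) : IsShuffle v u w := by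
  induction h with
  | nil => exact .nil
  | left a _ ih => exact .right a ih
  | right a _ ih => exact .left a ih

theorem shuffle_nil_left (v : List ℕ) : IsShuffle [] v v := by
  induction v with
  | nil => exact .nil
  | cons a v ih => exact .right a ih

theorem shuffle_nil_right (u : List ℕ) : IsShuffle u [] u := (shuffle_nil_left u).swap

theorem shuffle_of_nil_right {u v w : List ℕ} (h : IsShuffle u v w) (hv : v = []) : w = u := by
  induction h with
  | nil => rfl
  | left a _ ih => rw [ih hv]
  | right a h ih => exact absurd hv (by simp)

theorem shuffle_append_left (s : List ℕ) {u v w : List ℕ} (h : IsShuffle u v w) :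
    IsShuffle (s ++ u) v (s ++ w) := by
  induction s with
  | nil => exact h
  | cons a s ih => exact .left a ih

theorem shuffle_append_right (s : List ℕ) {u v w : List ℕ} (h : IsShuffle u v w) :
    IsShuffle u (s ++ v) (s ++ w) := ((shuffle_append_left s h.swap)).swap

/-! ### order basics -/

theorem le_cons_of_head_lt {a b : ℕ} {u v : List ℕ} (h : a < b) : a :: u ≤ b :: v :=
  le_of_lt (List.Lex.rel h)

/-! ### pair order -/

def ple (p q : ℕ × ℕ) : Prop := p.1 < q.1 ∨ (p.1 = q.1 ∧ p.2 ≤ q.2)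

def pgt (p q : ℕ × ℕ) : Prop := q.1 < p.1 ∨ (q.1 = p.1 ∧ q.2 < p.2)

/-! ### segEnum facts -/

theorem mem_segEnum {n : ℕ} {p : ℕ × ℕ} :
    p ∈ segEnum n ↔ 1 ≤ p.1 ∧ p.1 ≤ p.2 ∧ p.2 ≤ n := by
  obtain ⟨k, l⟩ := p
  simp only [segEnum, List.mem_flatten, List.mem_map, List.mem_reverse, List.mem_range'_1,
    Prod.mk.injEq]
  constructor
  · rintro ⟨_, ⟨k', hk, rfl⟩, hm⟩
    simp only [List.mem_map, List.mem_reverse, List.mem_range'_1, Prod.mk.injEq] at hm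
    obtain ⟨l', hl, rfl, rfl⟩ := hm
    omega
  · rintro ⟨h1, h2, h3⟩
    refine ⟨_, ⟨k, ⟨by omega, by omega⟩, rfl⟩, ?_⟩
    simp only [List.mem_map, List.mem_reverse, List.mem_range'_1, Prod.mk.injEq]
    exact ⟨l, ⟨by omega, by omega⟩, by simp⟩

theorem pairwise_range'_lt (j d : ℕ) : List.Pairwise (· < ·) (List.range' j d) := by
  induction d generalizing j with
  | zero => exact .nil
  | succ d ih =>
    rw [List.range'_succ]
    exact List.Pairwise.cons (fun x hx => by
      have := (List.mem_range'.1 hx); omega) (ih (j+1))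

theorem segEnum_pairwise (n : ℕ) : List.Pairwise pgt (segEnum n) := by
  rw [segEnum, List.pairwise_flatten]
  constructor
  · intro l hl
    obtain ⟨k, hk, rfl⟩ := List.mem_map.1 hl
    rw [List.pairwise_map, List.pairwise_reverse]
    refine (pairwise_range'_lt k _).imp ?_
    intro a b hab
    exact Or.inr ⟨rfl, hab⟩
  · rw [List.pairwise_map, List.pairwise_reverse]
    refine (pairwise_range'_lt 1 n).imp ?_
    intro a b hab
    intro x hx y hy
    obtain ⟨l1, _, rfl⟩ := List.mem_map.1 hx
    obtain ⟨l2, _, rfl⟩ := List.mem_map.1 hy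
    exact Or.inl hab

theorem segEnum_nodup (n : ℕ) : (segEnum n).Nodup :=
  (segEnum_pairwise n).imp (by
    rintro ⟨a1,a2⟩ ⟨b1,b2⟩ h
    simp only [pgt] at h
    simp only [ne_eq, Prod.mk.injEq, not_and]
    intro h1 h2
    omega)

/-! ### segWord facts -/

theorem segWord_cons {k l : ℕ} (h : k ≤ l) :
    segWord k l = k :: List.range' (k + 1) (l - k) := by
  have : l + 1 - k = (l - k) + 1 := by omega
  rw [segWord, this, List.range'_succ]

theorem segWord_length {k l : ℕ} : (segWord k l).length = l + 1 - k := by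
  simp [segWord]

theorem segWord_ne_nil {k l : ℕ} (h : k ≤ l) : segWord k l ≠ [] := by
  rw [segWord_cons h]; simp

/-! ### blocks -/

def blocks (c : ℕ × ℕ → ℕ) (L : List (ℕ × ℕ)) : List ℕ :=
  (L.map fun p => (List.replicate (c p) (segWord p.1 p.2)).flatten).flatten

theorem buildWord_eq_blocks (n : ℕ) (c : ℕ × ℕ → ℕ) : buildWord n c = blocks c (segEnum n) := rfl

theorem blocks_nil (c : ℕ × ℕ → ℕ) : blocks c [] = [] := rfl

theorem blocks_cons (c : ℕ × ℕ → ℕ) (p : ℕ × ℕ) (L : List (ℕ × ℕ)) :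
    blocks c (p :: L) = (List.replicate (c p) (segWord p.1 p.2)).flatten ++ blocks c L := by
  simp [blocks]

theorem blocks_append (c : ℕ × ℕ → ℕ) (L₁ L₂ : List (ℕ × ℕ)) :
    blocks c (L₁ ++ L₂) = blocks c L₁ ++ blocks c L₂ := by
  simp [blocks]

theorem blocks_congr {c c' : ℕ × ℕ → ℕ} {L : List (ℕ × ℕ)} (h : ∀ p ∈ L, c p = c' p) :
    blocks c L = blocks c' L := by
  unfold blocks
  congr 1
  exact List.map_congr_left (fun p hp => by rw [h p hp])

theorem blocks_eq_nil {c : ℕ × ℕ → ℕ} {L : List (ℕ × ℕ)} (h : ∀ p ∈ L, c p = 0) :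
    blocks c L = [] := by
  induction L with
  | nil => rfl
  | cons p L ih =>
    rw [blocks_cons, h p (by simp), ih (fun q hq => h q (by simp [hq]))]
    simp

theorem buildWord_congr {n : ℕ} {c c' : ℕ × ℕ → ℕ} (h : ∀ p ∈ segEnum n, c p = c' p) :
    buildWord n c = buildWord n c' := blocks_congr h

/-- subtract one copy of `p` -/
def dec (c : ℕ × ℕ → ℕ) (p : ℕ × ℕ) : ℕ × ℕ → ℕ := fun q => if q = p then c p - 1 else c q

theorem suppValid_dec {n : ℕ} {c : ℕ × ℕ → ℕ} (h : SuppValid n c) (p : ℕ × ℕ) :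
    SuppValid n (dec c p) := by
  intro q hq
  rcases eq_or_ne q p with rfl | hne
  · exact h q (by simp [dec] at hq; omega)
  · exact h q (by simpa [dec, hne] using hq)

theorem suppValid_add {n : ℕ} {c c' : ℕ × ℕ → ℕ} (h : SuppValid n c) (h' : SuppValid n c') :
    SuppValid n (fun p => c p + c' p) := by
  intro q hq
  have hq' : c q + c' q ≠ 0 := hq
  rcases Nat.eq_zero_or_pos (c q) with h0 | h0
  · exact h' q (by omega)
  · exact h q (by omega)

/-- the maximal (first) element of the support, within segEnum -/
theorem exists_max_aux (c : ℕ × ℕ → ℕ) :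
    ∀ L : List (ℕ × ℕ), List.Pairwise pgt L → (∃ p ∈ L, c p ≠ 0) →
      ∃ A p B, L = A ++ p :: B ∧ c p ≠ 0 ∧ (∀ q ∈ A, c q = 0) ∧ (∀ q ∈ L, c q ≠ 0 → ple q p) := by
  intro L hpw hex
  induction L with
  | nil => simp at hex
  | cons a L ih =>
    rcases Nat.eq_zero_or_pos (c a) with h0 | h0
    · have hex' : ∃ p ∈ L, c p ≠ 0 := by
        obtain ⟨p, hp, hcp⟩ := hex
        rcases List.mem_cons.1 hp with rfl | hp'
        · omega
        · exact ⟨p, hp', hcp⟩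
      obtain ⟨A, p, B, h1, h2, h3, h4⟩ := ih (List.Pairwise.sublist (List.sublist_cons_self a L) hpw)  hex'
      refine ⟨a :: A, p, B, by rw [h1]; rfl, h2, ?_, ?_⟩
      · intro q hq
        rcases List.mem_cons.1 hq with rfl | hq'
        · exact h0
        · exact h3 q hq'
      · intro q hq hcq
        rcases List.mem_cons.1 hq with rfl | hq'
        · omega
        · exact h4 q hq' hcq
    · refine ⟨[], a, L, rfl, by omega, by simp, ?_⟩
      intro q hq hcq
      rcases List.mem_cons.1 hq with rfl | hq'
      · exact Or.inr ⟨rfl, le_refl _⟩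
      · have := (List.pairwise_cons.1 hpw).1 q hq'
        unfold pgt at this
        unfold ple
        omega

theorem exists_max {n : ℕ} {c : ℕ × ℕ → ℕ} (hSV : SuppValid n c)
    (hne : ∃ p ∈ segEnum n, c p ≠ 0) :
    ∃ A p B, segEnum n = A ++ p :: B ∧ c p ≠ 0 ∧ (∀ q ∈ A, c q = 0) ∧
      (∀ q, c q ≠ 0 → ple q p) := by
  obtain ⟨A, p, B, h1, h2, h3, h4⟩ := exists_max_aux c (segEnum n) (segEnum_pairwise n) hne
  exact ⟨A, p, B, h1, h2, h3, fun q hq => h4 q (mem_segEnum.2 (hSV q hq)) hq⟩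

theorem flatten_replicate_succ (m : ℕ) (s : List ℕ) :
    (List.replicate (m + 1) s).flatten = s ++ (List.replicate m s).flatten := by
  rw [List.replicate_succ, List.flatten_cons]

theorem bw_decomp {n : ℕ} {c : ℕ × ℕ → ℕ} {A B : List (ℕ × ℕ)} {p : ℕ × ℕ}
    (h1 : segEnum n = A ++ p :: B) (h2 : c p ≠ 0) (h3 : ∀ q ∈ A, c q = 0) :
    buildWord n c = segWord p.1 p.2 ++ buildWord n (dec c p) := by
  have hnd := segEnum_nodup n
  rw [h1] at hnd
  have hpA : p ∉ A := by
    intro hp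
    exact (List.disjoint_of_nodup_append hnd) hp (by simp)
  have hpB : p ∉ B := by
    have := (List.nodup_append.1 hnd).2.1
    exact (List.nodup_cons.1 this).1
  obtain ⟨m, hm⟩ : ∃ m, c p = m + 1 := ⟨c p - 1, by omega⟩
  rw [buildWord_eq_blocks, buildWord_eq_blocks, h1, blocks_append, blocks_append,
    blocks_cons, blocks_cons]
  rw [blocks_eq_nil h3, blocks_eq_nil (c := dec c p)
    (fun q hq => by rw [dec, if_neg (fun he : q = p => hpA (by rwa [he] at hq))]; exact h3 q hq)]
  have hdecp : dec c p p = m := by simp [dec, hm]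
  have hB : blocks (dec c p) B = blocks c B :=
    blocks_congr (fun q hq => by rw [dec, if_neg (fun he : q = p => hpB (by rwa [he] at hq))])
  rw [hdecp, hB, hm, flatten_replicate_succ]
  simp

theorem bw_ne_nil_iff {n : ℕ} {c : ℕ × ℕ → ℕ} :
    buildWord n c = [] ↔ ∀ p ∈ segEnum n, c p = 0 := by
  constructor
  · intro h p hp
    by_contra hcp
    obtain ⟨A, q, B, h1, h2, h3, h4⟩ := exists_max_aux c (segEnum n) (segEnum_pairwise n)
      ⟨p, hp, hcp⟩
    have hq : q.1 ≤ q.2 := by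
      have : q ∈ segEnum n := by rw [h1]; simp
      exact (mem_segEnum.1 this).2.1
    rw [bw_decomp h1 h2 h3] at h
    rw [segWord_cons hq] at h
    simp at h
  · exact blocks_eq_nil

theorem bw_head_le {n : ℕ} {c : ℕ × ℕ → ℕ} {K : ℕ}
    (hb : ∀ q ∈ segEnum n, c q ≠ 0 → q.1 ≤ K) :
    ∀ {t : List ℕ} {a : ℕ}, buildWord n c = a :: t → a ≤ K := by
  intro t a he
  by_cases hz : ∃ p ∈ segEnum n, c p ≠ 0
  · obtain ⟨A, q, B, h1, h2, h3, h4⟩ := exists_max_aux c (segEnum n) (segEnum_pairwise n) hz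
    have hqmem : q ∈ segEnum n := by rw [h1]; simp
    have hq : q.1 ≤ q.2 := (mem_segEnum.1 hqmem).2.1
    rw [bw_decomp h1 h2 h3, segWord_cons hq] at he
    obtain rfl : q.1 = a := by
      have := congrArg List.head? he
      simpa using this
    exact hb q hqmem h2
  · push_neg at hz
    rw [bw_ne_nil_iff.2 hz] at he
    exact absurd he (by simp)

/-! ### the peeling lemma -/

theorem peel2 (d : ℕ) : ∀ {e j : ℕ} {X V B : List ℕ} {w : List ℕ}, d ≤ e →
    IsShuffle (List.range' j d ++ X) V w →
    (∀ a t, X = a :: t → a < j) → (∀ a t, V = a :: t → a < j) →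
    (d = e → ∀ w', IsShuffle X V w' → w' ≤ B) →
    w ≤ List.range' j e ++ B := by
  induction d with
  | zero =>
    intro e j X V B w hde hsh hX hV hexit
    have hsh' : IsShuffle X V w := by simpa using hsh
    cases e with
    | zero => simpa using hexit rfl w hsh'
    | succ e' =>
      rw [List.range'_succ]
      cases hsh' with
      | nil => exact le_of_not_gt (fun h => nomatch h)
      | left a h => exact le_cons_of_head_lt (hX _ _ rfl)
      | right a h => exact le_cons_of_head_lt (hV _ _ rfl)
  | succ d ih =>
    intro e j X V B w hde hsh hX hV hexit
    cases e with
    | zero => omega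
    | succ e' =>
      rw [List.range'_succ, List.cons_append] at hsh
      rw [List.range'_succ, List.cons_append]
      cases hsh with
      | left a h =>
        refine List.cons_le_cons j (ih (by omega) h ?_ ?_ ?_)
        · exact fun a t ht => Nat.lt_succ_of_lt (hX a t ht)
        · exact fun a t ht => Nat.lt_succ_of_lt (hV a t ht)
        · exact fun hde' => hexit (by omega)
      | right a h => exact le_cons_of_head_lt (hV _ _ rfl)

/-! ### membership -/

theorem mem_A_pgt {n : ℕ} {A B : List (ℕ × ℕ)} {p : ℕ × ℕ}
    (h1 : segEnum n = A ++ p :: B) : ∀ r ∈ A, pgt r p := by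
  have hpw := segEnum_pairwise n
  rw [h1, List.pairwise_append] at hpw
  exact fun r hr => hpw.2.2 r hr p (by simp)

theorem A_sub_segEnum {n : ℕ} {A B : List (ℕ × ℕ)} {p : ℕ × ℕ}
    (h1 : segEnum n = A ++ p :: B) : ∀ r ∈ A, r ∈ segEnum n := by
  intro r hr; rw [h1]; exact List.mem_append_left _ hr

theorem dec_add_left {c c' : ℕ × ℕ → ℕ} {p : ℕ × ℕ} (h : c p ≠ 0) :
    dec (fun r => c r + c' r) p = fun r => dec c p r + c' r := by
  funext r
  unfold dec
  by_cases hr : r = p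
  · rw [if_pos hr, if_pos hr, hr]
    exact (by omega : c p + c' p - 1 = c p - 1 + c' p)
  · rw [if_neg hr, if_neg hr]

theorem dec_add_right {c c' : ℕ × ℕ → ℕ} {p : ℕ × ℕ} (h : c' p ≠ 0) :
    dec (fun r => c r + c' r) p = fun r => c r + dec c' p r := by
  funext r
  unfold dec
  by_cases hr : r = p
  · rw [if_pos hr, if_pos hr, hr]
    exact (by omega : c p + c' p - 1 = c p + (c' p - 1))
  · rw [if_neg hr, if_neg hr]

theorem bw_len_decomp {n : ℕ} {c : ℕ × ℕ → ℕ} {A B : List (ℕ × ℕ)} {p : ℕ × ℕ}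
    (h1 : segEnum n = A ++ p :: B) (h2 : c p ≠ 0) (h3 : ∀ q ∈ A, c q = 0) :
    (buildWord n (dec c p)).length < (buildWord n c).length := by
  have hd := bw_decomp h1 h2 h3
  have hpmem : p ∈ segEnum n := by rw [h1]; simp
  have hkl : p.1 ≤ p.2 := (mem_segEnum.1 hpmem).2.1
  rw [hd, List.length_append, segWord_length]
  omega

theorem shuffle_bw : ∀ N : ℕ, ∀ {n : ℕ} {c c' : ℕ × ℕ → ℕ},
    SuppValid n c → SuppValid n c' →
    (buildWord n c).length + (buildWord n c').length ≤ N →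
    IsShuffle (buildWord n c) (buildWord n c') (buildWord n (fun p => c p + c' p)) := by
  intro N
  induction N with
  | zero =>
    intro n c c' hSV hSV' hlen
    have h1 : buildWord n c = [] := by
      cases h : buildWord n c with
      | nil => rfl
      | cons a t => rw [h] at hlen; simp at hlen
    have h2 : buildWord n c' = [] := by
      cases h : buildWord n c' with
      | nil => rfl
      | cons a t => rw [h] at hlen; simp at hlen
    have h3 : buildWord n (fun p => c p + c' p) = [] := by
      rw [bw_ne_nil_iff]
      intro p hp
      have ha := bw_ne_nil_iff.1 h1 p hp
      have hb := bw_ne_nil_iff.1 h2 p hp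
      show c p + c' p = 0
      omega
    rw [h1, h2, h3]; exact .nil
  | succ N ih =>
    intro n c c' hSV hSV' hlen
    by_cases hz : ∃ p ∈ segEnum n, (fun r => c r + c' r) p ≠ 0
    · obtain ⟨A, p, B, h1, h2, h3, _⟩ :=
        exists_max_aux (fun r => c r + c' r) (segEnum n) (segEnum_pairwise n) hz
      have hpmem : p ∈ segEnum n := by rw [h1]; simp
      have hkl : p.1 ≤ p.2 := (mem_segEnum.1 hpmem).2.1
      have h3c : ∀ q ∈ A, c q = 0 := by
        intro q hq; have hx : c q + c' q = 0 := h3 q hq; omega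
      have h3c' : ∀ q ∈ A, c' q = 0 := by
        intro q hq; have hx : c q + c' q = 0 := h3 q hq; omega
      by_cases hcp : c p ≠ 0
      · have hdc := bw_decomp h1 hcp h3c
        have hds := bw_decomp h1 h2 h3
        rw [hds, dec_add_left hcp, hdc]
        refine shuffle_append_left _ (ih (suppValid_dec hSV p) hSV' ?_)
        have := bw_len_decomp h1 hcp h3c
        omega
      · have hcp' : c' p ≠ 0 := by have hx : c p + c' p ≠ 0 := h2; omega
        have hdc := bw_decomp h1 hcp' h3c'
        have hds := bw_decomp h1 h2 h3
        rw [hds, dec_add_right hcp', hdc]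
        refine shuffle_append_right _ (ih hSV (suppValid_dec hSV' p) ?_)
        have := bw_len_decomp h1 hcp' h3c'
        omega
    · push_neg at hz
      have h1 : buildWord n c = [] := bw_ne_nil_iff.2 (fun p hp => by have h : c p + c' p = 0 := hz p hp; omega)
      have h3 : buildWord n (fun p => c p + c' p) = buildWord n c' :=
        buildWord_congr (fun p hp => by have h : c p + c' p = 0 := hz p hp; omega)
      rw [h1, h3]
      exact shuffle_nil_left _

/-! ### upper bound -/

theorem ple_trans {a b c : ℕ × ℕ} (h1 : ple a b) (h2 : ple b c) : ple a c := by
  unfold ple at *; omega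

theorem great_core {n N : ℕ} {c c' : ℕ × ℕ → ℕ} {a : ℕ} {u w' : List ℕ}
    (hSV : SuppValid n c) (hSV' : SuppValid n c')
    (hIH : ∀ c₁ c₁' : ℕ × ℕ → ℕ, ∀ w₁ : List ℕ, SuppValid n c₁ → SuppValid n c₁' →
      (buildWord n c₁).length + (buildWord n c₁').length < N →
      IsShuffle (buildWord n c₁) (buildWord n c₁') w₁ →
      w₁ ≤ buildWord n (fun p => c₁ p + c₁' p))
    (hlen : (buildWord n c).length + (buildWord n c').length ≤ N)
    (hμ : buildWord n c = a :: u) (hsh : IsShuffle u (buildWord n c') w') :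
    a :: w' ≤ buildWord n (fun p => c p + c' p) := by
  have hz : ∃ p ∈ segEnum n, c p ≠ 0 := by
    by_contra hz
    push_neg at hz
    rw [bw_ne_nil_iff.2 hz] at hμ
    exact absurd hμ (by simp)
  obtain ⟨A, p, B, h1, h2, h3, h4⟩ := exists_max hSV hz
  have hpmem : p ∈ segEnum n := by rw [h1]; simp
  have hkl : p.1 ≤ p.2 := (mem_segEnum.1 hpmem).2.1
  have hdec : buildWord n c = p.1 :: (List.range' (p.1 + 1) (p.2 - p.1) ++ buildWord n (dec c p)) := by
    rw [bw_decomp h1 h2 h3, segWord_cons hkl, List.cons_append]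
  have hau : a = p.1 ∧ u = List.range' (p.1 + 1) (p.2 - p.1) ++ buildWord n (dec c p) := by
    have := hμ.symm.trans hdec
    exact ⟨(List.cons.injEq .. ▸ this).1, (List.cons.injEq .. ▸ this).2⟩
  obtain ⟨rfl, rfl⟩ := hau
  set X := buildWord n (dec c p) with hXdef
  have hX : ∀ b t, X = b :: t → b < p.1 + 1 := by
    intro b t hbt
    have hb : b ≤ p.1 := by
      refine bw_head_le ?_ hbt
      intro q hq hqne
      by_cases hqp : q = p
      · subst hqp; exact le_refl _
      · have hcq : c q ≠ 0 := by
          intro h0; apply hqne; unfold dec; rw [if_neg hqp]; exact h0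
        have := h4 q hcq
        unfold ple at this; omega
    omega
  have hlenX : (buildWord n (dec c p)).length + (buildWord n c').length < N :=
    lt_of_lt_of_le (by have := bw_len_decomp h1 h2 h3; omega) hlen
  by_cases hz' : ∃ q ∈ segEnum n, c' q ≠ 0
  · obtain ⟨A', q, B', g1, g2, g3, g4⟩ := exists_max hSV' hz'
    have hqmem : q ∈ segEnum n := by rw [g1]; simp
    have hqkl : q.1 ≤ q.2 := (mem_segEnum.1 hqmem).2.1
    by_cases hqp : ple q p
    · -- sum decomposes at p
      have hs3 : ∀ r ∈ A, (fun s => c s + c' s) r = 0 := by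
        intro r hr
        have hc : c r = 0 := h3 r hr
        have hc' : c' r = 0 := by
          by_contra hc'
          have h5 := ple_trans (g4 r hc') hqp
          have h6 := mem_A_pgt h1 r hr
          unfold ple at h5; unfold pgt at h6; omega
        show c r + c' r = 0
        omega
      have hds : buildWord n (fun s => c s + c' s) =
          segWord p.1 p.2 ++ buildWord n (fun r => dec c p r + c' r) := by
        rw [bw_decomp h1 (show (fun s => c s + c' s) p ≠ 0 from by show c p + c' p ≠ 0; omega) hs3,
          dec_add_left h2]
      have hV : ∀ b t, buildWord n c' = b :: t → b < p.1 + 1 := by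
        intro b t hbt
        have hb : b ≤ p.1 := by
          refine bw_head_le ?_ hbt
          intro r hr hrne
          have := g4 r hrne
          unfold ple at this hqp; omega
        omega
      have hexit : p.2 - p.1 = p.2 - p.1 → ∀ w'', IsShuffle X (buildWord n c') w'' →
          w'' ≤ buildWord n (fun r => dec c p r + c' r) :=
        fun _ w'' hw'' => hIH (dec c p) c' w'' (suppValid_dec hSV p) hSV' hlenX hw''
      have hpeel := peel2 (p.2 - p.1) (le_refl _) hsh hX hV hexit
      rw [hds, segWord_cons hkl, List.cons_append]
      exact List.cons_le_cons _ hpeel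
    · have hcase : p.1 < q.1 ∨ (q.1 = p.1 ∧ p.2 < q.2) := by
        unfold ple at hqp; omega
      have hs3' : ∀ r ∈ A', (fun s => c s + c' s) r = 0 := by
        intro r hr
        have hc' : c' r = 0 := g3 r hr
        have hc : c r = 0 := by
          by_contra hc
          have h5 : ple r q := by
            refine ple_trans (h4 r hc) ?_
            unfold ple; omega
          have h6 := mem_A_pgt g1 r hr
          unfold ple at h5; unfold pgt at h6; omega
        show c r + c' r = 0
        omega
      have hds : buildWord n (fun s => c s + c' s) =
          segWord q.1 q.2 ++ buildWord n (dec (fun s => c s + c' s) q) :=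
        bw_decomp g1 (show (fun s => c s + c' s) q ≠ 0 from by show c q + c' q ≠ 0; omega) hs3'
      rcases hcase with hlt | ⟨hq1, hq2⟩
      · rw [hds, segWord_cons hqkl]
        exact le_cons_of_head_lt hlt
      · rw [hds, segWord_cons hqkl, List.cons_append, hq1]
        refine List.cons_le_cons _ ?_
        have hV : ∀ b t, buildWord n c' = b :: t → b < p.1 + 1 := by
          intro b t hbt
          have hb : b ≤ p.1 := by
            refine bw_head_le ?_ hbt
            intro r hr hrne
            have := g4 r hrne
            unfold ple at this; omega
          omega
        exact peel2 (p.2 - p.1) (by omega) hsh hX hV (fun hde => absurd hde (by omega))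
  · -- c' vanishes on segEnum
    push_neg at hz'
    have hnil : buildWord n c' = [] := bw_ne_nil_iff.2 hz'
    have hs3 : ∀ r ∈ A, (fun s => c s + c' s) r = 0 := by
      intro r hr
      have hc : c r = 0 := h3 r hr
      have hc' : c' r = 0 := hz' r (A_sub_segEnum h1 r hr)
      show c r + c' r = 0
      omega
    have hds : buildWord n (fun s => c s + c' s) =
        segWord p.1 p.2 ++ buildWord n (fun r => dec c p r + c' r) := by
      rw [bw_decomp h1 (show (fun s => c s + c' s) p ≠ 0 from by show c p + c' p ≠ 0; omega) hs3,
        dec_add_left h2]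
    have hV : ∀ b t, buildWord n c' = b :: t → b < p.1 + 1 := by
      intro b t hbt
      rw [hnil] at hbt
      exact absurd hbt (by simp)
    have hexit : p.2 - p.1 = p.2 - p.1 → ∀ w'', IsShuffle X (buildWord n c') w'' →
        w'' ≤ buildWord n (fun r => dec c p r + c' r) :=
      fun _ w'' hw'' => hIH (dec c p) c' w'' (suppValid_dec hSV p) hSV' hlenX hw''
    have hpeel := peel2 (p.2 - p.1) (le_refl _) hsh hX hV hexit
    rw [hds, segWord_cons hkl, List.cons_append]
    exact List.cons_le_cons _ hpeel

theorem shuffle_cases {u v w : List ℕ} (h : IsShuffle u v w) :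
    (u = [] ∧ v = [] ∧ w = []) ∨
    (∃ a u' w', u = a :: u' ∧ w = a :: w' ∧ IsShuffle u' v w') ∨
    (∃ a v' w', v = a :: v' ∧ w = a :: w' ∧ IsShuffle u v' w') := by
  cases h with
  | nil => exact Or.inl ⟨rfl, rfl, rfl⟩
  | left a h => exact Or.inr (Or.inl ⟨a, _, _, rfl, rfl, h⟩)
  | right a h => exact Or.inr (Or.inr ⟨a, _, _, rfl, rfl, h⟩)

theorem great : ∀ N : ℕ, ∀ {n : ℕ} {c c' : ℕ × ℕ → ℕ} {w : List ℕ},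
    SuppValid n c → SuppValid n c' →
    (buildWord n c).length + (buildWord n c').length ≤ N →
    IsShuffle (buildWord n c) (buildWord n c') w →
    w ≤ buildWord n (fun p => c p + c' p) := by
  intro N
  induction N using Nat.strong_induction_on with
  | _ N ih =>
    intro n c c' w hSV hSV' hlen hsh
    rcases shuffle_cases hsh with ⟨_, _, rfl⟩ | ⟨a, u', w', hu, rfl, hsh'⟩ |
      ⟨a, v', w', hv, rfl, hsh'⟩
    · exact le_of_not_gt (fun h => by generalize buildWord n (fun p => c p + c' p) = x at h; exact nomatch h)
    · exact great_core hSV hSV'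
        (fun c₁ c₁' w₁ h1 h2 h3 h4 => ih _ h3 h1 h2 (le_refl _) h4)
        hlen hu hsh'
    · have hres := great_core hSV' hSV
        (fun c₁ c₁' w₁ h1 h2 h3 h4 => ih _ h3 h1 h2 (le_refl _) h4)
        (by omega) hv hsh'.swap
      have : (fun p => c' p + c p) = fun p => c p + c' p := funext (fun p => Nat.add_comm _ _)
      rwa [this] at hres

/-! ### more order helpers -/

theorem le_append_self (u v : List ℕ) : u ≤ u ++ v := by
  induction u with
  | nil => exact le_of_not_gt (fun h => nomatch h)
  | cons a u ih => exact List.cons_le_cons a ih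

theorem segword_le_of_pgt {p q : ℕ × ℕ} (hpq : pgt p q) (hp : p.1 ≤ p.2) (hq : q.1 ≤ q.2) :
    segWord q.1 q.2 ≤ segWord p.1 p.2 := by
  rcases hpq with h | ⟨h1, h2⟩
  · rw [segWord_cons hp, segWord_cons hq]
    exact le_cons_of_head_lt h
  · have hsplit : segWord p.1 p.2 = segWord q.1 q.2 ++ List.range' (q.2 + 1) (p.2 - q.2) := by
      have h3 := List.range'_append (s := q.1) (m := q.2 + 1 - q.1) (n := p.2 - q.2) (step := 1)
      rw [show q.1 + 1 * (q.2 + 1 - q.1) = q.2 + 1 by omega,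
        show q.2 + 1 - q.1 + (p.2 - q.2) = p.2 + 1 - q.1 by omega] at h3
      rw [h1] at h3
      rw [segWord, segWord, h1]
      exact h3.symm
    rw [hsplit]
    exact le_append_self _ _

theorem pairwise_replicate_ge (m : ℕ) (s : List ℕ) :
    List.Pairwise (fun x y : List ℕ => x ≥ y) (List.replicate m s) := by
  induction m with
  | zero => exact .nil
  | succ m ih =>
    rw [List.replicate_succ]
    refine List.Pairwise.cons ?_ ih
    intro y hy
    rw [List.eq_of_mem_replicate hy]

theorem bw_dominant (n : ℕ) (c : ℕ × ℕ → ℕ) : IsDominant n (buildWord n c) := by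
  refine ⟨(segEnum n).flatMap fun p => List.replicate (c p) (segWord p.1 p.2), ?_, ?_, ?_⟩
  · apply List.Pairwise.isChain
    rw [List.flatMap, List.pairwise_flatten]
    constructor
    · intro l hl
      obtain ⟨p, _, rfl⟩ := List.mem_map.1 hl
      exact pairwise_replicate_ge _ _
    · rw [List.pairwise_map]
      refine (segEnum_pairwise n).imp_of_mem ?_
      intro p q hp hq hpq x hx y hy
      rw [List.eq_of_mem_replicate hx, List.eq_of_mem_replicate hy]
      have hpb := mem_segEnum.1 hp
      have hqb := mem_segEnum.1 hq
      exact segword_le_of_pgt hpq hpb.2.1 hqb.2.1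
  · intro u hu
    obtain ⟨p, hp, hu'⟩ := List.mem_flatMap.1 hu
    obtain ⟨h1, h2, h3⟩ := mem_segEnum.1 hp
    rw [List.eq_of_mem_replicate hu']
    exact ⟨p.1, p.2, h1, h2, h3, rfl⟩
  · rw [buildWord_eq_blocks]
    induction segEnum n with
    | nil => rfl
    | cons p L ih =>
      rw [List.flatMap_cons, List.flatten_append, ih, blocks_cons]

/-! ### injectivity -/

theorem bw_inj : ∀ N : ℕ, ∀ {n : ℕ} {c c' : ℕ × ℕ → ℕ},
    SuppValid n c → SuppValid n c' → (buildWord n c).length ≤ N →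
    buildWord n c = buildWord n c' → ∀ r, c r = c' r := by
  intro N
  induction N using Nat.strong_induction_on with
  | _ N ih =>
    intro n c c' hSV hSV' hlen heq r
    by_cases hz : ∃ p ∈ segEnum n, c p ≠ 0
    · obtain ⟨A, p, B, h1, h2, h3, h4⟩ := exists_max hSV hz
      have hpmem : p ∈ segEnum n := by rw [h1]; simp
      have hkl : p.1 ≤ p.2 := (mem_segEnum.1 hpmem).2.1
      have hz' : ∃ q ∈ segEnum n, c' q ≠ 0 := by
        by_contra hz'
        push_neg at hz'
        rw [bw_ne_nil_iff.2 hz'] at heq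
        rw [bw_decomp h1 h2 h3, segWord_cons hkl] at heq
        exact absurd heq (by simp)
      obtain ⟨A', q, B', g1, g2, g3, g4⟩ := exists_max hSV' hz'
      have hqmem : q ∈ segEnum n := by rw [g1]; simp
      have hqkl : q.1 ≤ q.2 := (mem_segEnum.1 hqmem).2.1
      have hdc : buildWord n c = p.1 :: (List.range' (p.1 + 1) (p.2 - p.1) ++ buildWord n (dec c p)) := by
        rw [bw_decomp h1 h2 h3, segWord_cons hkl, List.cons_append]
      have hdc' : buildWord n c' = q.1 :: (List.range' (q.1 + 1) (q.2 - q.1) ++ buildWord n (dec c' q)) := by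
        rw [bw_decomp g1 g2 g3, segWord_cons hqkl, List.cons_append]
      rw [hdc, hdc'] at heq
      have hfst : p.1 = q.1 := (List.cons.injEq .. ▸ heq).1
      have htail : List.range' (p.1 + 1) (p.2 - p.1) ++ buildWord n (dec c p)
          = List.range' (q.1 + 1) (q.2 - q.1) ++ buildWord n (dec c' q) :=
        (List.cons.injEq .. ▸ heq).2
      have hXhead : ∀ b t, buildWord n (dec c p) = b :: t → b ≤ p.1 := by
        intro b t hbt
        refine bw_head_le ?_ hbt
        intro s hs hsne
        by_cases hsp : s = p
        · subst hsp; exact le_refl _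
        · have hcs : c s ≠ 0 := fun h0 => hsne (by unfold dec; rw [if_neg hsp]; exact h0)
          have := h4 s hcs; unfold ple at this; omega
      have hYhead : ∀ b t, buildWord n (dec c' q) = b :: t → b ≤ q.1 := by
        intro b t hbt
        refine bw_head_le ?_ hbt
        intro s hs hsne
        by_cases hsq : s = q
        · subst hsq; exact le_refl _
        · have hcs : c' s ≠ 0 := fun h0 => hsne (by unfold dec; rw [if_neg hsq]; exact h0)
          have := g4 s hcs; unfold ple at this; omega
      have hsnd : p.2 = q.2 := by
        by_contra hne
        rcases Nat.lt_or_ge p.2 q.2 with hlt | hge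
        · have e1 : List.range' (q.1 + 1) (q.2 - q.1) =
              List.range' (p.1 + 1) (p.2 - p.1) ++ List.range' (p.2 + 1) (q.2 - p.2) := by
            have h5 := List.range'_append (s := p.1 + 1) (m := p.2 - p.1) (n := q.2 - p.2) (step := 1)
            rw [show p.1 + 1 + 1 * (p.2 - p.1) = p.2 + 1 by omega,
              show p.2 - p.1 + (q.2 - p.2) = q.2 - q.1 by omega] at h5
            rw [show q.1 + 1 = p.1 + 1 by omega]
            exact h5.symm
          rw [e1, List.append_assoc] at htail
          have h6 := List.append_cancel_left htail
          rw [show q.2 - p.2 = (q.2 - p.2 - 1) + 1 by omega, List.range'_succ] at h6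
          have := hXhead _ _ h6
          omega
        · have hlt : q.2 < p.2 := by omega
          have e1 : List.range' (p.1 + 1) (p.2 - p.1) =
              List.range' (q.1 + 1) (q.2 - q.1) ++ List.range' (q.2 + 1) (p.2 - q.2) := by
            have h5 := List.range'_append (s := q.1 + 1) (m := q.2 - q.1) (n := p.2 - q.2) (step := 1)
            rw [show q.1 + 1 + 1 * (q.2 - q.1) = q.2 + 1 by omega,
              show q.2 - q.1 + (p.2 - q.2) = p.2 - p.1 by omega] at h5
            rw [show p.1 + 1 = q.1 + 1 by omega]
            exact h5.symm
          rw [e1, List.append_assoc] at htail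
          have h6 := List.append_cancel_left htail
          rw [show p.2 - q.2 = (p.2 - q.2 - 1) + 1 by omega, List.range'_succ] at h6
          have := hYhead _ _ h6.symm
          omega
      have hpq : p = q := Prod.ext hfst hsnd
      subst hpq
      have hXY : buildWord n (dec c p) = buildWord n (dec c' p) :=
        List.append_cancel_left htail
      have hlen' : (buildWord n (dec c p)).length < N :=
        lt_of_lt_of_le (bw_len_decomp h1 h2 h3) hlen
      have hrec := ih _ hlen' (suppValid_dec hSV p) (suppValid_dec hSV' p) (le_refl _) hXY
      by_cases hrp : r = p
      · subst hrp
        have h7 := hrec r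
        unfold dec at h7
        rw [if_pos rfl, if_pos rfl] at h7
        omega
      · have h7 := hrec r
        unfold dec at h7
        rwa [if_neg hrp, if_neg hrp] at h7
    · push_neg at hz
      have hnil : buildWord n c = [] := bw_ne_nil_iff.2 hz
      have hz' : ∀ q ∈ segEnum n, c' q = 0 := bw_ne_nil_iff.1 (heq ▸ hnil)
      by_cases hr : r ∈ segEnum n
      · rw [hz r hr, hz' r hr]
      · have h8 : c r = 0 := by
          by_contra h8
          exact hr (mem_segEnum.2 (hSV r h8))
        have h9 : c' r = 0 := by
          by_contra h9
          exact hr (mem_segEnum.2 (hSV' r h9))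
        rw [h8, h9]

/-! ### surjectivity -/

theorem lt_append_self (u v : List ℕ) (hv : v ≠ []) : u < u ++ v := by
  induction u with
  | nil =>
    cases v with
    | nil => exact absurd rfl hv
    | cons b t => exact List.nil_lt_cons b t
  | cons a u ih => exact List.Lex.cons ih

theorem segword_pair_le {p q : ℕ × ℕ} (hp : p.1 ≤ p.2) (hq : q.1 ≤ q.2)
    (h : segWord q.1 q.2 ≤ segWord p.1 p.2) : ple q p := by
  by_contra hqp
  have hgt : pgt q p := by unfold ple at hqp; unfold pgt; omega
  have hlt : segWord p.1 p.2 < segWord q.1 q.2 := by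
    rcases hgt with h5 | ⟨h5, h6⟩
    · rw [segWord_cons hp, segWord_cons hq]
      exact List.Lex.rel h5
    · have e1 : segWord q.1 q.2 = segWord p.1 p.2 ++ List.range' (p.2 + 1) (q.2 - p.2) := by
        have h7 := List.range'_append (s := p.1) (m := p.2 + 1 - p.1) (n := q.2 - p.2) (step := 1)
        rw [show p.1 + 1 * (p.2 + 1 - p.1) = p.2 + 1 by omega,
          show p.2 + 1 - p.1 + (q.2 - p.2) = q.2 + 1 - p.1 by omega] at h7
        rw [segWord, segWord, show q.1 = p.1 by omega]
        exact h7.symm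
      rw [e1]
      exact lt_append_self _ _ (by
        rw [show q.2 - p.2 = (q.2 - p.2 - 1) + 1 by omega, List.range'_succ]
        simp)
  exact absurd h (not_le_of_gt hlt)

theorem bw_surj {n : ℕ} : ∀ fs : List (List ℕ), List.Chain' (· ≥ ·) fs →
    (∀ u ∈ fs, IsSegment n u) →
    ∃ c, SuppValid n c ∧ buildWord n c = fs.flatten ∧
      (∀ q : ℕ × ℕ, c q ≠ 0 → segWord q.1 q.2 ∈ fs ∧ 1 ≤ q.1 ∧ q.1 ≤ q.2 ∧ q.2 ≤ n) := by
  intro fs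
  induction fs with
  | nil =>
    intro _ _
    refine ⟨fun _ => 0, fun p hp => absurd rfl hp, ?_, fun q hq => absurd rfl hq⟩
    exact blocks_eq_nil (fun p _ => rfl)
  | cons s fs ih =>
    intro hch hseg
    obtain ⟨c', hSV', hbw', hsupp'⟩ := ih hch.tail (fun u hu => hseg u (List.mem_cons_of_mem s hu))
    obtain ⟨k, l, hk1, hkl, hln, hs⟩ := hseg s (List.mem_cons_self)
    set p : ℕ × ℕ := (k, l) with hpdef
    set c : ℕ × ℕ → ℕ := fun q => if q = p then c' q + 1 else c' q with hcdef
    have hcp : c p = c' p + 1 := by rw [hcdef]; simp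
    have hcne : ∀ q, q ≠ p → c q = c' q := by intro q hq; rw [hcdef]; simp [hq]
    have hSV : SuppValid n c := by
      intro q hq
      by_cases hqp : q = p
      · subst hqp; exact ⟨hk1, hkl, hln⟩
      · exact hSV' q (by rwa [hcne q hqp] at hq)
    have hsupp : ∀ q : ℕ × ℕ, c q ≠ 0 →
        segWord q.1 q.2 ∈ s :: fs ∧ 1 ≤ q.1 ∧ q.1 ≤ q.2 ∧ q.2 ≤ n := by
      intro q hq
      by_cases hqp : q = p
      · subst hqp
        exact ⟨by rw [hs]; exact List.mem_cons_self, hk1, hkl, hln⟩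
      · obtain ⟨hmem, hb⟩ := hsupp' q (by rwa [hcne q hqp] at hq)
        exact ⟨List.mem_cons_of_mem s hmem, hb⟩
    -- p is maximal in the support of c
    have hmax : ∀ q, c q ≠ 0 → ple q p := by
      intro q hq
      by_cases hqp : q = p
      · subst hqp; exact Or.inr ⟨rfl, le_refl _⟩
      · obtain ⟨hmem, hq1, hq2, hq3⟩ := hsupp' q (by rwa [hcne q hqp] at hq)
        have hle : segWord q.1 q.2 ≤ s := by
          have hpw := List.isChain_iff_pairwise.1 hch
          exact (List.pairwise_cons.1 hpw).1 _ hmem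
        rw [hs] at hle
        exact segword_pair_le hkl hq2 hle
    have hpmem : p ∈ segEnum n := mem_segEnum.2 ⟨hk1, hkl, hln⟩
    have hz : ∃ q ∈ segEnum n, c q ≠ 0 := ⟨p, hpmem, by omega⟩
    obtain ⟨A, p₀, B, h1, h2, h3, h4⟩ := exists_max hSV hz
    have hpp : p₀ = p := by
      have e1 := hmax p₀ h2
      have e2 := h4 p (by omega)
      unfold ple at e1 e2
      exact Prod.ext (by omega) (by omega)
    subst hpp
    have hdecc : dec c p = c' := by
      funext q
      by_cases hqp : q = p
      · subst hqp; unfold dec; rw [if_pos rfl, hcp]; omega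
      · unfold dec; rw [if_neg hqp]; exact hcne q hqp
    refine ⟨c, hSV, ?_, hsupp⟩
    rw [bw_decomp h1 h2 h3, hdecc, hbw', List.flatten_cons]
    congr 1
    exact hs.symm

/-! ### counting -/

theorem sum_aux (n : ℕ) : ∀ m : ℕ, m ≤ n →
    2 * (((List.range' 1 m).map fun k => n + 1 - k).sum) + m * (m + 1) = 2 * (m * (n + 1)) := by
  intro m
  induction m with
  | zero => simp
  | succ m ihm =>
    intro hm
    have ih := ihm (by omega)
    rw [List.range'_concat, List.map_append, List.sum_append]
    simp only [List.map_cons, List.map_nil, List.sum_cons, List.sum_nil]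
    have e1 : (m + 1) * (m + 1 + 1) = m * (m + 1) + 2 * (m + 1) := by ring
    have e2 : 2 * ((m + 1) * (n + 1)) = 2 * (m * (n + 1)) + 2 * (n + 1) := by ring
    omega

theorem segEnum_length (n : ℕ) : (segEnum n).length = n * (n + 1) / 2 := by
  have h1 : (segEnum n).length = ((List.range' 1 n).map fun k => n + 1 - k).sum := by
    rw [segEnum, List.length_flatten, List.map_map]
    have e : ((List.range' 1 n).reverse.map
        (List.length ∘ fun k => (List.range' k (n + 1 - k)).reverse.map fun l => (k, l))).sum
        = ((List.range' 1 n).reverse.map fun k => n + 1 - k).sum := by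
      congr 1
      apply List.map_congr_left
      intro k _
      simp
    rw [e, List.map_reverse, List.sum_reverse]
  have h2 := sum_aux n n (le_refl n)
  obtain ⟨k, hk⟩ := Nat.even_mul_succ_self n
  rw [h1]
  omega

/-! ### greatest packaging -/

theorem bw_greatest {n : ℕ} {c c' : ℕ × ℕ → ℕ} (hSV : SuppValid n c) (hSV' : SuppValid n c') :
    IsGreatest {w | IsShuffle (buildWord n c) (buildWord n c') w}
      (buildWord n (fun p => c p + c' p)) :=
  ⟨shuffle_bw _ hSV hSV' (le_refl _), fun _ hw => great _ hSV hSV' (le_refl _) hw⟩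

theorem dominant_to_bw {n : ℕ} {μ : List ℕ} (h : IsDominant n μ) :
    ∃ c, SuppValid n c ∧ buildWord n c = μ := by
  obtain ⟨fs, hch, hsg, hfl⟩ := h
  obtain ⟨c, hSV, hbw, _⟩ := bw_surj fs hch hsg
  exact ⟨c, hSV, hbw.trans hfl⟩

theorem shuffle_set_comm (μ μ' : List ℕ) :
    {w | IsShuffle μ μ' w} = {w | IsShuffle μ' μ w} :=
  Set.ext (fun w => ⟨fun h => h.swap, fun h => h.swap⟩)


/-- The set `M` of dominant words over {1,…,n}, equipped with the product
`μ ⊙ μ' := maxSh (μ, μ')` (the lexicographically greatest shuffle), is a commutative monoid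
with identity the empty word, and the multiplicity-vector map is a monoid isomorphism
onto `(ℕ^{r_n}, +)` where `r_n = n(n+1)/2` is the number of segments. -/
theorem dominant_words_monoid_iso (n : ℕ) (hn : 1 ≤ n) :
    -- the greatest shuffle of two dominant words exists and is again dominant
    (∀ μ μ' : List ℕ, IsDominant n μ → IsDominant n μ' →
        ∃ m, IsGreatest {w | IsShuffle μ μ' w} m ∧ IsDominant n m) ∧
    -- commutativity of ⊙
    (∀ μ μ' m : List ℕ,
        IsGreatest {w | IsShuffle μ μ' w} m ↔ IsGreatest {w | IsShuffle μ' μ w} m) ∧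
    -- the empty word is dominant and is the identity for ⊙
    IsDominant n [] ∧
    (∀ μ : List ℕ, IsGreatest {w | IsShuffle μ [] w} μ) ∧
    -- associativity of ⊙
    (∀ μ ν ρ a b c d : List ℕ,
        IsDominant n μ → IsDominant n ν → IsDominant n ρ →
        IsGreatest {w | IsShuffle μ ν w} a → IsGreatest {w | IsShuffle a ρ w} b →
        IsGreatest {w | IsShuffle ν ρ w} c → IsGreatest {w | IsShuffle μ c w} d →
        b = d) ∧
    -- there are r_n = n(n+1)/2 segments
    (segEnum n).length = n * (n + 1) / 2 ∧
    -- the multiplicity-vector map is a monoid isomorphism onto (ℕ^{r_n}, +),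
    -- expressed via its inverse `buildWord`:
    (∀ c : ℕ × ℕ → ℕ, SuppValid n c → IsDominant n (buildWord n c)) ∧
    (∀ c c' : ℕ × ℕ → ℕ, SuppValid n c → SuppValid n c' →
        buildWord n c = buildWord n c' → c = c') ∧
    (∀ μ : List ℕ, IsDominant n μ → ∃ c, SuppValid n c ∧ buildWord n c = μ) ∧
    buildWord n (fun _ => 0) = [] ∧
    (∀ c c' : ℕ × ℕ → ℕ, SuppValid n c → SuppValid n c' →
        IsGreatest {w | IsShuffle (buildWord n c) (buildWord n c') w}
          (buildWord n (fun p => c p + c' p))) := by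
  refine ⟨?_, ?_, ?_, ?_, ?_, segEnum_length n, fun c _ => bw_dominant n c,
    fun c c' h h' heq => funext (bw_inj _ h h' (le_refl _) heq),
    fun μ h => dominant_to_bw h, blocks_eq_nil (fun _ _ => rfl),
    fun c c' h h' => bw_greatest h h'⟩
  · intro μ μ' hμ hμ'
    obtain ⟨c, hSV, rfl⟩ := dominant_to_bw hμ
    obtain ⟨c', hSV', rfl⟩ := dominant_to_bw hμ'
    exact ⟨buildWord n (fun p => c p + c' p), bw_greatest hSV hSV', bw_dominant n _⟩
  · intro μ μ' m
    rw [shuffle_set_comm]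
  · exact ⟨[], List.isChain_nil, fun u hu => absurd hu List.not_mem_nil, rfl⟩
  · intro μ
    exact ⟨shuffle_nil_right μ, fun w hw => le_of_eq (shuffle_of_nil_right hw rfl)⟩
  · intro μ ν ρ a b c d hμ hν hρ ha hb hc hd
    obtain ⟨c₁, h1, rfl⟩ := dominant_to_bw hμ
    obtain ⟨c₂, h2, rfl⟩ := dominant_to_bw hν
    obtain ⟨c₃, h3, rfl⟩ := dominant_to_bw hρ
    have ea : a = buildWord n (fun p => c₁ p + c₂ p) := ha.unique (bw_greatest h1 h2)
    have ec : c = buildWord n (fun p => c₂ p + c₃ p) := hc.unique (bw_greatest h2 h3)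
    subst ea ec
    have eb : b = buildWord n (fun p => (c₁ p + c₂ p) + c₃ p) :=
      hb.unique (bw_greatest (suppValid_add h1 h2) h3)
    have ed : d = buildWord n (fun p => c₁ p + (c₂ p + c₃ p)) :=
      hd.unique (bw_greatest h1 (suppValid_add h2 h3))
    rw [eb, ed]
    congr 1
    funext p
    omega
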